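/- Let 𝒞 be a field of subsets of Ω. P : 𝒞 → [0,1] is coherent in betting system 2 if and only if P is a countably additive probability on 𝒞. -/

import Mathlib

open Filter MeasureTheory ENNReal

variable {Ω : Type*}

noncomputable def ind (A : Set Ω) (ω : Ω) : ℝ := A.indicator (fun _ => (1:ℝ)) ω

def SeriesTendsTo (f : ℕ → ℝ) (x : ℝ) : Prop :=
  Tendsto (fun n => ∑ i ∈ Finset.range n, f i) atTop (nhds x)

def SeriesConv (f : ℕ → ℝ) : Prop := ∃ x, SeriesTendsTo f x

noncomputable def bterm (P : Set Ω → ℝ) (α : ℕ → ℝ) (A : ℕ → Set Ω) (ω : Ω) (i : ℕ) : ℝ :=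
  α i * (ind (A i) ω - P (A i))

def IsSetField (C : Set (Set Ω)) : Prop :=
  Set.univ ∈ C ∧ (∀ A ∈ C, Aᶜ ∈ C) ∧ ∀ A ∈ C, ∀ B ∈ C, A ∪ B ∈ C

def System1 (C : Set (Set Ω)) (α : ℕ → ℝ) (A : ℕ → Set Ω) : Prop :=
  (∀ i, A i ∈ C) ∧ {i | α i ≠ 0}.Finite

def System2 (C : Set (Set Ω)) (P : Set Ω → ℝ) (α : ℕ → ℝ) (A : ℕ → Set Ω) : Prop :=
  (∀ i, A i ∈ C) ∧ Summable (fun i => |α i| * P (A i)) ∧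
    ∀ ω, SeriesConv (bterm P α A ω)

def System2A (C : Set (Set Ω)) (P : Set Ω → ℝ) (α : ℕ → ℝ) (A : ℕ → Set Ω) : Prop :=
  (∀ i, A i ∈ C) ∧ ∀ ω, Summable (fun i => |bterm P α A ω i|)

def System2B (C : Set (Set Ω)) (P : Set Ω → ℝ) (α : ℕ → ℝ) (A : ℕ → Set Ω) : Prop :=
  (∀ i, A i ∈ C) ∧ ∃ M : ℝ, ∀ ω, ∀ n, ∑ i ∈ Finset.range n, |bterm P α A ω i| ≤ M

def System3 (C : Set (Set Ω)) (P : Set Ω → ℝ) (α : ℕ → ℝ) (A : ℕ → Set Ω) : Prop :=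
  (∀ i, A i ∈ C) ∧ SeriesConv (fun i => α i * P (A i)) ∧
    ∀ ω, SeriesConv (bterm P α A ω)

def IncoherentIn (P : Set Ω → ℝ) (S : (ℕ → ℝ) → (ℕ → Set Ω) → Prop) : Prop :=
  ∃ α A, S α A ∧ ∃ ε > (0:ℝ), ∀ ω, ∃ L, SeriesTendsTo (bterm P α A ω) L ∧ L ≤ -ε

def CoherentIn (P : Set Ω → ℝ) (S : (ℕ → ℝ) → (ℕ → Set Ω) → Prop) : Prop :=
  ¬ IncoherentIn P S

def IsNullSet (C : Set (Set Ω)) (P : Set Ω → ℝ) (Z : Set Ω) : Prop :=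
  ∀ δ : ℝ, 0 < δ → ∃ Zd ∈ C, Z ⊆ Zd ∧ P Zd < δ

def WeaklyIncoherentIn (C : Set (Set Ω)) (P : Set Ω → ℝ)
    (S : (ℕ → ℝ) → (ℕ → Set Ω) → Prop) : Prop :=
  ∃ α A, S α A ∧ ∃ ε > (0:ℝ), ∃ Z : Set Ω, IsNullSet C P Z ∧
    ∀ ω ∉ Z, ∃ L, SeriesTendsTo (bterm P α A ω) L ∧ L ≤ -ε

def StronglyCoherentIn (C : Set (Set Ω)) (P : Set Ω → ℝ)
    (S : (ℕ → ℝ) → (ℕ → Set Ω) → Prop) : Prop :=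
  ¬ WeaklyIncoherentIn C P S

def IrrationalIn (P : Set Ω → ℝ) (S : (ℕ → ℝ) → (ℕ → Set Ω) → Prop) : Prop :=
  ∃ α A, S α A ∧ ∀ ω, ∃ L, SeriesTendsTo (bterm P α A ω) L ∧ L < 0

def RationalIn (P : Set Ω → ℝ) (S : (ℕ → ℝ) → (ℕ → Set Ω) → Prop) : Prop :=
  ¬ IrrationalIn P S

def IsCAProb (C : Set (Set Ω)) (P : Set Ω → ℝ) : Prop :=
  P Set.univ = 1 ∧ (∀ A ∈ C, 0 ≤ P A) ∧
  (∀ A ∈ C, ∀ B ∈ C, Disjoint A B → P (A ∪ B) = P A + P B) ∧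
  (∀ A : ℕ → Set Ω, (∀ i, A i ∈ C) → Pairwise (Function.onFun Disjoint A) →
    (⋃ i, A i) ∈ C → HasSum (fun i => P (A i)) (P (⋃ i, A i)))

def IsPAtom (C : Set (Set Ω)) (P : Set Ω → ℝ) (F : Set Ω) : Prop :=
  F ∈ C ∧ 0 < P F ∧ ∀ B ∈ C, B ⊆ F → P B = P F ∨ P B = 0

def FiniteAtomicPartition (C : Set (Set Ω)) (P : Set Ω → ℝ) : Prop :=
  ∃ (n : ℕ) (F : Fin n → Set Ω), (∀ j, IsPAtom C P (F j)) ∧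
    Pairwise (Function.onFun Disjoint F) ∧ (⋃ j, F j) = Set.univ

def IsPFinite (C : Set (Set Ω)) (P : Set Ω → ℝ) : Prop :=
  ∀ B : ℕ → Set Ω, (∀ i, B i ∈ C) → (∀ i, B (i+1) ⊆ B i) →
    Tendsto (fun i => P (B i)) atTop (nhds 0) → ∃ j, P (B j) = 0

-- helpers
lemma seriesTendsTo_of_eventually_zero (f : ℕ → ℝ) (N : ℕ) (h : ∀ i, N ≤ i → f i = 0) :
    SeriesTendsTo f (∑ i ∈ Finset.range N, f i) := by
  apply tendsto_atTop_of_eventually_const (i₀ := N)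
  intro n hn
  exact (Finset.sum_subset (Finset.range_subset_range.2 hn)
    (fun i _ hi => h i (by simpa using (Finset.mem_range.not.mp hi)))).symm

section Field
variable {C : Set (Set Ω)} (hC : IsSetField C)
include hC

lemma sf_empty : (∅ : Set Ω) ∈ C := by
  simpa using hC.2.1 _ hC.1

lemma sf_inter {A B : Set Ω} (hA : A ∈ C) (hB : B ∈ C) : A ∩ B ∈ C := by
  have := hC.2.1 _ (hC.2.2 _ (hC.2.1 _ hA) _ (hC.2.1 _ hB))
  simpa [Set.compl_union] using this

lemma sf_diff {A B : Set Ω} (hA : A ∈ C) (hB : B ∈ C) : A \ B ∈ C := by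
  have := sf_inter hC hA (hC.2.1 _ hB)
  simpa [Set.diff_eq] using this

lemma sf_biUnion (A : ℕ → Set Ω) (hA : ∀ i, A i ∈ C) (n : ℕ) :
    (⋃ i < n, A i) ∈ C := by
  induction n with
  | zero => simpa using sf_empty hC
  | succ n ih =>
      rw [Set.biUnion_lt_succ]
      exact hC.2.2 _ ih _ (hA n)
end Field

lemma ind_nonneg (A : Set Ω) (ω : Ω) : 0 ≤ ind A ω := by
  unfold ind; by_cases h : ω ∈ A <;> simp [h]

lemma ind_le_one (A : Set Ω) (ω : Ω) : ind A ω ≤ 1 := by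
  unfold ind; by_cases h : ω ∈ A <;> simp [h]

lemma ind_union_disjoint {A B : Set Ω} (hd : Disjoint A B) (ω : Ω) :
    ind (A ∪ B) ω = ind A ω + ind B ω := by
  unfold ind
  by_cases hA : ω ∈ A
  · have hB : ω ∉ B := fun hB => Set.disjoint_left.mp hd hA hB
    simp [hA, hB]
  · by_cases hB : ω ∈ B <;> simp [hA, hB]

lemma ind_sum_disjoint {A : ℕ → Set Ω} (hd : Pairwise (Function.onFun Disjoint A)) (ω : Ω)
    (n : ℕ) : ∑ i ∈ Finset.range n, ind (A i) ω = ind (⋃ i < n, A i) ω := by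
  induction n with
  | zero => simp [ind]
  | succ n ih =>
      rw [Finset.sum_range_succ, ih, Set.biUnion_lt_succ,
        ind_union_disjoint]
      exact Set.disjoint_left.2 fun x hx hxn => by
        obtain ⟨i, hi, hxi⟩ := Set.mem_iUnion₂.mp hx
        exact Set.disjoint_left.mp (hd (Nat.ne_of_lt hi)) hxi hxn

-- incoherence from a finitely supported bet with constant negative balance
lemma incoherent_of_const_finite {C : Set (Set Ω)} (P : Set Ω → ℝ) (α : ℕ → ℝ)
    (A : ℕ → Set Ω) (N : ℕ) (hα : ∀ i, N ≤ i → α i = 0) (hA : ∀ i, A i ∈ C)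
    (c : ℝ) (hc : c < 0)
    (hbal : ∀ ω, ∑ i ∈ Finset.range N, bterm P α A ω i = c) :
    IncoherentIn P (System2 C P) := by
  have hz : ∀ ω i, N ≤ i → bterm P α A ω i = 0 := by
    intro ω i hi; simp [bterm, hα i hi]
  refine ⟨α, A, ⟨hA, ?_, fun ω => ⟨c, ?_⟩⟩, -c, by linarith, fun ω => ⟨c, ?_, by linarith⟩⟩
  · apply summable_of_ne_finset_zero (s := Finset.range N)
    intro i hi
    simp [hα i (by simpa using (Finset.mem_range.not.mp hi))]
  · have := seriesTendsTo_of_eventually_zero (bterm P α A ω) N (hz ω)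
    rwa [hbal ω] at this
  · have := seriesTendsTo_of_eventually_zero (bterm P α A ω) N (hz ω)
    rwa [hbal ω] at this

section Forward
variable {C : Set (Set Ω)} {P : Set Ω → ℝ}

lemma coh_univ (hC : IsSetField C) (hco : CoherentIn P (System2 C P)) :
    P Set.univ = 1 := by
  by_contra h
  apply hco
  set c₀ : ℝ := if P Set.univ < 1 then -1 else 1 with hc₀
  apply incoherent_of_const_finite P (fun i => if i = 0 then c₀ else 0)
    (fun _ => Set.univ) 1 (fun i hi => if_neg (by omega)) (fun _ => hC.1)
    (c₀ * (1 - P Set.univ))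
  · rcases lt_or_gt_of_ne h with h1 | h1
    · have : c₀ = -1 := by simp [hc₀, h1]
      rw [this]; nlinarith
    · have : c₀ = 1 := by simp [hc₀, not_lt.2 (le_of_lt h1)]
      rw [this]; nlinarith
  · intro ω
    simp [bterm, ind, Set.indicator_univ]

lemma coh_add (hC : IsSetField C) (hco : CoherentIn P (System2 C P))
    {A B : Set Ω} (hA : A ∈ C) (hB : B ∈ C) (hd : Disjoint A B) :
    P (A ∪ B) = P A + P B := by
  by_contra h
  apply hco
  set d : ℝ := P (A ∪ B) - P A - P B with hdd
  have hd0 : d ≠ 0 := by simp [hdd]; intro h'; exact h (by linarith)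
  set s : ℝ := if 0 < d then 1 else -1 with hs
  set α : ℕ → ℝ := fun i => if i = 0 then s else if i = 1 then -s else if i = 2 then -s else 0
    with hα
  set F : ℕ → Set Ω := fun i => if i = 0 then A ∪ B else if i = 1 then A else B with hF
  apply incoherent_of_const_finite P α F 3
    (fun i hi => by simp only [hα]; rw [if_neg (by omega), if_neg (by omega), if_neg (by omega)])
    (fun i => by
      rcases i with _ | _ | i <;> simp [hF, hC.2.2 _ hA _ hB, hA, hB])
    (-(|d|)) (neg_lt_zero.mpr (abs_pos.mpr hd0))
  intro ω
  have hind : ind (A ∪ B) ω = ind A ω + ind B ω := ind_union_disjoint hd ω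
  have : ∑ i ∈ Finset.range 3, bterm P α F ω i = s * (-d) := by
    simp [Finset.sum_range_succ, bterm, hα, hF, hind]
    ring
  rw [this]
  rcases lt_or_gt_of_ne hd0 with h1 | h1
  · have : s = -1 := by simp [hs, not_lt.2 (le_of_lt h1)]
    rw [this, abs_of_neg h1]; ring
  · have : s = 1 := by simp [hs, h1]
    rw [this, abs_of_pos h1]; ring

end Forward

section Forward2
variable {C : Set (Set Ω)} {P : Set Ω → ℝ}

lemma ind_eq_one {A : Set Ω} {ω : Ω} (h : ω ∈ A) : ind A ω = 1 := by simp [ind, h]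
lemma ind_eq_zero {A : Set Ω} {ω : Ω} (h : ω ∉ A) : ind A ω = 0 := by simp [ind, h]

lemma P_mono (hC : IsSetField C) (hnn : ∀ A ∈ C, 0 ≤ P A)
    (hadd : ∀ A ∈ C, ∀ B ∈ C, Disjoint A B → P (A ∪ B) = P A + P B)
    {A B : Set Ω} (hA : A ∈ C) (hB : B ∈ C) (hAB : A ⊆ B) : P A ≤ P B := by
  have h1 : P (A ∪ B \ A) = P A + P (B \ A) :=
    hadd _ hA _ (sf_diff hC hB hA) disjoint_sdiff_self_right
  rw [Set.union_diff_cancel hAB] at h1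
  have := hnn _ (sf_diff hC hB hA)
  linarith

lemma coh_ca (hC : IsSetField C) (hrange : ∀ A ∈ C, P A ∈ Set.Icc (0:ℝ) 1)
    (hco : CoherentIn P (System2 C P))
    (hadd : ∀ A ∈ C, ∀ B ∈ C, Disjoint A B → P (A ∪ B) = P A + P B)
    (A : ℕ → Set Ω) (hA : ∀ i, A i ∈ C) (hdisj : Pairwise (Function.onFun Disjoint A))
    (hU : (⋃ i, A i) ∈ C) : HasSum (fun i => P (A i)) (P (⋃ i, A i)) := by
  set U := ⋃ i, A i with hUdef
  have hnn : ∀ B ∈ C, 0 ≤ P B := fun B hB => (hrange B hB).1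
  have hfin : ∀ n, P (⋃ i < n, A i) = ∑ i ∈ Finset.range n, P (A i) := by
    intro n
    induction n with
    | zero => simp; have h0 : P (∅ ∪ (∅:Set Ω)) = P ∅ + P ∅ := hadd _ (sf_empty hC) _ (sf_empty hC) disjoint_bot_left
              simp at h0; linarith
    | succ n ih =>
        rw [Set.biUnion_lt_succ, Finset.sum_range_succ, ← ih]
        refine hadd _ (sf_biUnion hC A hA n) _ (hA n) ?_
        exact Set.disjoint_left.2 fun x hx hxn => by
          obtain ⟨i, hi, hxi⟩ := Set.mem_iUnion₂.mp hx
          exact Set.disjoint_left.mp (hdisj (Nat.ne_of_lt hi)) hxi hxn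
  have hbd : ∀ n, ∑ i ∈ Finset.range n, P (A i) ≤ P U := by
    intro n
    rw [← hfin n]
    exact P_mono hC hnn hadd (sf_biUnion hC A hA n) hU
      (Set.iUnion₂_subset fun i _ => Set.subset_iUnion A i)
  have hsummable : Summable (fun i => P (A i)) :=
    summable_of_sum_range_le (fun i => hnn _ (hA i)) hbd
  set s := ∑' i, P (A i) with hsdef
  have hs : HasSum (fun i => P (A i)) s := hsummable.hasSum
  have hPs : Tendsto (fun n => ∑ i ∈ Finset.range n, P (A i)) atTop (nhds s) :=
    hs.tendsto_sum_nat
  have hsle : s ≤ P U := le_of_tendsto hPs (Filter.Eventually.of_forall hbd)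
  rcases eq_or_lt_of_le hsle with heq | hlt
  · rwa [← heq]
  exfalso
  apply hco
  set α' : ℕ → ℝ := fun i => Nat.casesOn i (1:ℝ) fun _ => -1 with hα'
  set A' : ℕ → Set Ω := fun i => Nat.casesOn i U A with hA'
  have hmem : ∀ i, A' i ∈ C := by intro i; cases i with
    | zero => exact hU
    | succ n => exact hA n
  have hsum2 : Summable (fun i => |α' i| * P (A' i)) := by
    apply (summable_nat_add_iff 1).1
    simpa [hα', hA'] using hsummable
  have hlim : ∀ ω, Tendsto (fun n => ∑ i ∈ Finset.range n, bterm P α' A' ω i) atTop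
      (nhds (s - P U)) := by
    intro ω
    have hindlim : Tendsto (fun n => ∑ i ∈ Finset.range n, ind (A i) ω) atTop
        (nhds (ind U ω)) := by
      by_cases hω : ω ∈ U
      · obtain ⟨i₀, hi₀⟩ := Set.mem_iUnion.mp hω
        apply tendsto_atTop_of_eventually_const (i₀ := i₀ + 1)
        intro n hn
        rw [ind_sum_disjoint hdisj, ind_eq_one hω, ind_eq_one]
        exact Set.mem_iUnion₂.2 ⟨i₀, by omega, hi₀⟩
      · apply tendsto_atTop_of_eventually_const (i₀ := 0)
        intro n _
        rw [ind_sum_disjoint hdisj, ind_eq_zero hω, ind_eq_zero]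
        intro hx
        obtain ⟨i, _, hxi⟩ := Set.mem_iUnion₂.mp hx
        exact hω (Set.mem_iUnion.2 ⟨i, hxi⟩)
    apply (tendsto_add_atTop_iff_nat 1).1
    have heq : ∀ n, ∑ i ∈ Finset.range (n + 1), bterm P α' A' ω i =
        (∑ i ∈ Finset.range n, P (A i) - ∑ i ∈ Finset.range n, ind (A i) ω)
          + (ind U ω - P U) := by
      intro n
      rw [Finset.sum_range_succ']
      have h0 : bterm P α' A' ω 0 = ind U ω - P U := by simp [bterm, hα', hA']
      have hS : ∀ i, bterm P α' A' ω (i + 1) = P (A i) - ind (A i) ω := by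
        intro i; simp [bterm, hα', hA']
      rw [h0]
      congr 1
      rw [← Finset.sum_sub_distrib]
      exact Finset.sum_congr rfl fun i _ => hS i
    have h2 : Tendsto (fun n => (∑ i ∈ Finset.range n, P (A i)
        - ∑ i ∈ Finset.range n, ind (A i) ω) + (ind U ω - P U)) atTop
        (nhds ((s - ind U ω) + (ind U ω - P U))) :=
      Tendsto.add_const _ (hPs.sub hindlim)
    rw [show (s - ind U ω) + (ind U ω - P U) = s - P U by ring] at h2
    exact h2.congr fun n => (heq n).symm
  exact ⟨α', A', ⟨hmem, hsum2, fun ω => ⟨s - P U, hlim ω⟩⟩, P U - s, by linarith,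
    fun ω => ⟨s - P U, hlim ω, by linarith⟩⟩

end Forward2

lemma P_mono' {C : Set (Set Ω)} {P : Set Ω → ℝ} (hC : IsSetField C)
    (hnn : ∀ A ∈ C, 0 ≤ P A)
    (hadd : ∀ A ∈ C, ∀ B ∈ C, Disjoint A B → P (A ∪ B) = P A + P B)
    {A B : Set Ω} (hA : A ∈ C) (hB : B ∈ C) (hAB : A ⊆ B) : P A ≤ P B := by
  have h1 : P (A ∪ B \ A) = P A + P (B \ A) :=
    hadd _ hA _ (sf_diff hC hB hA) disjoint_sdiff_self_right
  rw [Set.union_diff_cancel hAB] at h1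
  have := hnn _ (sf_diff hC hB hA)
  linarith

lemma P_empty {C : Set (Set Ω)} {P : Set Ω → ℝ} (hC : IsSetField C)
    (hadd : ∀ A ∈ C, ∀ B ∈ C, Disjoint A B → P (A ∪ B) = P A + P B) : P ∅ = 0 := by
  have := hadd _ (sf_empty hC) _ (sf_empty hC) disjoint_bot_left
  simp at this; linarith

/-- countable subadditivity over covers -/
lemma P_cover {C : Set (Set Ω)} {P : Set Ω → ℝ} (hC : IsSetField C)
    (hP : IsCAProb C P) {s : Set Ω} (hs : s ∈ C) (f : ℕ → Set Ω) (hf : ∀ i, f i ∈ C)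
    (hcov : s ⊆ ⋃ i, f i) :
    ENNReal.ofReal (P s) ≤ ∑' i, ENNReal.ofReal (P (f i)) := by
  classical
  obtain ⟨_, hnn, hadd, hca⟩ := hP
  set g : ℕ → Set Ω := fun i => (s ∩ f i) \ ⋃ j < i, f j with hg
  have hgmem : ∀ i, g i ∈ C := fun i =>
    sf_diff hC (sf_inter hC hs (hf i)) (sf_biUnion hC f hf i)
  have hgd : Pairwise (Function.onFun Disjoint g) := by
    have key : ∀ {a b : ℕ}, a < b → Disjoint (g a) (g b) := by
      intro a b hab
      refine Set.disjoint_left.2 fun x hxa hxb => ?_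
      exact hxb.2 (Set.mem_iUnion₂.2 ⟨a, hab, hxa.1.2⟩)
    intro i j hij
    rcases hij.lt_or_gt with h | h
    · exact key h
    · exact (key h).symm
  have hgU : (⋃ i, g i) = s := by
    apply Set.Subset.antisymm
    · exact Set.iUnion_subset fun i => (Set.diff_subset).trans Set.inter_subset_left
    · intro x hx
      obtain ⟨i, hi⟩ := Set.mem_iUnion.mp (hcov hx)
      have hex : ∃ i, x ∈ f i := ⟨i, hi⟩
      refine Set.mem_iUnion.2 ⟨Nat.find hex, ⟨⟨hx, Nat.find_spec hex⟩, ?_⟩⟩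
      intro hmem
      obtain ⟨j, hj, hxj⟩ := Set.mem_iUnion₂.mp hmem
      exact Nat.find_min hex hj hxj
  have hgsum : HasSum (fun i => P (g i)) (P s) := by
    have := hca g hgmem hgd (by rw [hgU]; exact hs)
    rwa [hgU] at this
  calc ENNReal.ofReal (P s) = ENNReal.ofReal (∑' i, P (g i)) := by rw [hgsum.tsum_eq]
    _ = ∑' i, ENNReal.ofReal (P (g i)) :=
        ENNReal.ofReal_tsum_of_nonneg (fun i => hnn _ (hgmem i)) hgsum.summable
    _ ≤ ∑' i, ENNReal.ofReal (P (f i)) := by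
        refine ENNReal.tsum_le_tsum fun i => ENNReal.ofReal_le_ofReal ?_
        exact P_mono' hC hnn hadd (hgmem i) (hf i)
          ((Set.diff_subset).trans Set.inter_subset_right)

/-- Carathéodory extension of a countably additive probability on a field -/
lemma exists_extension_measure {C : Set (Set Ω)} {P : Set Ω → ℝ} (hC : IsSetField C)
    (hP : IsCAProb C P) :
    ∃ (ms : MeasurableSpace Ω) (μ : Measure Ω), IsProbabilityMeasure μ ∧
      ∀ s ∈ C, MeasurableSet[ms] s ∧ μ s = ENNReal.ofReal (P s) := by
  obtain ⟨huniv, hnn, hadd, hca⟩ := hP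
  set m : ∀ s : Set Ω, s ∈ C → ℝ≥0∞ := fun s _ => ENNReal.ofReal (P s) with hm
  have P0 : (∅ : Set Ω) ∈ C := sf_empty hC
  have m0 : m ∅ P0 = 0 := by simp [hm, P_empty hC hadd]
  set ν : OuterMeasure Ω := inducedOuterMeasure m P0 m0 with hν
  -- ν agrees with P on C
  have hag : ∀ s (hs : s ∈ C), ν s = ENNReal.ofReal (P s) := by
    intro s hs
    refine le_antisymm ?_ ?_
    · exact (OuterMeasure.ofFunction_le s).trans (le_of_eq (extend_eq m hs))
    · rw [hν, inducedOuterMeasure, OuterMeasure.ofFunction_apply]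
      refine le_iInf fun f => le_iInf fun hcov => ?_
      by_cases hfC : ∀ i, f i ∈ C
      · refine le_trans (P_cover hC ⟨huniv, hnn, hadd, hca⟩ hs f hfC hcov) ?_
        exact ENNReal.tsum_le_tsum fun i => le_of_eq (extend_eq m (hfC i)).symm
      · push_neg at hfC
        obtain ⟨i, hi⟩ := hfC
        refine le_trans le_top ?_
        rw [← extend_eq_top m hi]
        exact ENNReal.le_tsum i
  -- every member of C is Carathéodory measurable
  have hcar : ∀ s ∈ C, ν.caratheodory.MeasurableSet' s := by
    intro s hs
    rw [hν, inducedOuterMeasure]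
    apply OuterMeasure.ofFunction_caratheodory
    intro t
    by_cases htC : t ∈ C
    · rw [extend_eq m htC]
      have h1 : t ∩ s ∈ C := sf_inter hC htC hs
      have h2 : t \ s ∈ C := sf_diff hC htC hs
      have hdisj : Disjoint (t ∩ s) (t \ s) :=
        Set.disjoint_left.2 fun x hx hx2 => hx2.2 hx.2
      have hun : (t ∩ s) ∪ (t \ s) = t := Set.inter_union_diff t s
      have : P t = P (t ∩ s) + P (t \ s) := by
        conv_lhs => rw [← hun]
        exact hadd _ h1 _ h2 hdisj
      calc extend m (t ∩ s) + extend m (t \ s)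
          = ENNReal.ofReal (P (t ∩ s)) + ENNReal.ofReal (P (t \ s)) := by
            rw [extend_eq m h1, extend_eq m h2]
        _ = ENNReal.ofReal (P t) := by
            rw [this, ENNReal.ofReal_add (hnn _ h1) (hnn _ h2)]
        _ = m t htC := rfl
        _ ≤ m t htC := le_rfl
    · rw [extend_eq_top m htC]; exact le_top
  letI ms : MeasurableSpace Ω := ν.caratheodory
  refine ⟨ms, ν.toMeasure le_rfl, ?_, fun s hs => ⟨hcar s hs, ?_⟩⟩
  · constructor
    rw [toMeasure_apply _ _ MeasurableSet.univ, hag _ hC.1, huniv, ofReal_one]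
  · rw [toMeasure_apply _ _ (hcar s hs), hag s hs]

lemma ind_nonneg' (A : Set Ω) (ω : Ω) : 0 ≤ ind A ω := by
  unfold ind; by_cases h : ω ∈ A <;> simp [h]

lemma ca_coherent {C : Set (Set Ω)} {P : Set Ω → ℝ} (hC : IsSetField C)
    (hrange : ∀ A ∈ C, P A ∈ Set.Icc (0:ℝ) 1) (hP : IsCAProb C P) :
    CoherentIn P (System2 C P) := by
  rintro ⟨α, A, ⟨hA, hsum, _⟩, ε, hε, hL⟩
  obtain ⟨ms, μ, hprob, hms⟩ := exists_extension_measure hC hP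
  letI := ms
  haveI := hprob
  have hmeas : ∀ i, MeasurableSet (A i) := fun i => (hms _ (hA i)).1
  have hμA : ∀ i, μ (A i) = ENNReal.ofReal (P (A i)) := fun i => (hms _ (hA i)).2
  have hnnP : ∀ i, 0 ≤ P (A i) := fun i => (hrange _ (hA i)).1
  set L : Ω → ℝ := fun ω => Classical.choose (hL ω) with hLdef
  have hL1 : ∀ ω, Tendsto (fun n => ∑ i ∈ Finset.range n, bterm P α A ω i) atTop
      (nhds (L ω)) := fun ω => (Classical.choose_spec (hL ω)).1
  have hL2 : ∀ ω, L ω ≤ -ε := fun ω => (Classical.choose_spec (hL ω)).2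
  -- dominating function
  set T : ℕ → Ω → ℝ≥0∞ := fun i ω =>
    ENNReal.ofReal |α i| * ((A i).indicator (1 : Ω → ℝ≥0∞) ω + ENNReal.ofReal (P (A i)))
    with hT
  have hTmeas : ∀ i, Measurable (T i) := fun i =>
    ((measurable_const.indicator (hmeas i)).add measurable_const).const_mul _
  set G : Ω → ℝ≥0∞ := fun ω => ∑' i, T i ω with hG
  have hGmeas : Measurable G := Measurable.ennreal_tsum hTmeas
  have hTint : ∀ i, ∫⁻ ω, T i ω ∂μ = 2 * ENNReal.ofReal (|α i| * P (A i)) := by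
    intro i
    simp only [hT]
    have hm0 : Measurable ((A i).indicator (1 : Ω → ℝ≥0∞)) := measurable_one.indicator (hmeas i)
    have hm1 : Measurable (fun ω : Ω =>
        (A i).indicator (1 : Ω → ℝ≥0∞) ω + ENNReal.ofReal (P (A i))) :=
      hm0.add measurable_const
    rw [lintegral_const_mul _ hm1, lintegral_add_left hm0,
      lintegral_indicator_one (hmeas i), lintegral_const, measure_univ, mul_one, hμA i,
      ENNReal.ofReal_mul (abs_nonneg _)]
    ring
  have hGint : ∫⁻ ω, G ω ∂μ < ∞ := by
    rw [hG]
    rw [lintegral_tsum (fun i => (hTmeas i).aemeasurable)]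
    simp_rw [hTint]
    rw [ENNReal.tsum_mul_left,
      ← ENNReal.ofReal_tsum_of_nonneg (fun i => mul_nonneg (abs_nonneg _) (hnnP i)) hsum]
    exact ENNReal.mul_lt_top (by norm_num) ofReal_lt_top
  have hGae : ∀ᵐ ω ∂μ, G ω < ∞ := ae_lt_top hGmeas hGint.ne
  set bound : Ω → ℝ := fun ω => (G ω).toReal with hbound
  -- pointwise domination
  have hdom : ∀ ω, G ω < ∞ → ∀ n,
      |∑ i ∈ Finset.range n, bterm P α A ω i| ≤ bound ω := by
    intro ω hω n
    have h2 : ∀ i, ENNReal.ofReal |bterm P α A ω i| ≤ T i ω := by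
      intro i
      have hb : |bterm P α A ω i| ≤ |α i| * (ind (A i) ω + P (A i)) := by
        rw [bterm, abs_mul]
        refine mul_le_mul_of_nonneg_left ?_ (abs_nonneg _)
        rw [abs_sub_comm]
        refine (abs_sub _ _).trans ?_
        rw [abs_of_nonneg (hnnP i), abs_of_nonneg (ind_nonneg' _ _)]
        linarith
      refine (ENNReal.ofReal_le_ofReal hb).trans (le_of_eq ?_)
      rw [hT, ENNReal.ofReal_mul (abs_nonneg _)]
      congr 1
      rw [ENNReal.ofReal_add (ind_nonneg' _ _) (hnnP i)]
      congr 1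
      by_cases h : ω ∈ A i <;> simp [ind, h]
    have h3 : ENNReal.ofReal (∑ i ∈ Finset.range n, |bterm P α A ω i|) ≤ G ω := by
      rw [ENNReal.ofReal_sum_of_nonneg (fun i _ => abs_nonneg _)]
      exact le_trans (Finset.sum_le_sum fun i _ => h2 i) (ENNReal.sum_le_tsum _)
    have h4 : ∑ i ∈ Finset.range n, |bterm P α A ω i| ≤ bound ω :=
      (ENNReal.ofReal_le_iff_le_toReal hω.ne).1 h3
    exact le_trans (Finset.abs_sum_le_sum_abs _ _) h4
  have hbound_int : Integrable bound μ := by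
    refine ⟨(hGmeas.ennreal_toReal).aestronglyMeasurable, ?_⟩
    rw [hasFiniteIntegral_iff_norm]
    refine lt_of_le_of_lt (lintegral_mono fun ω => ?_) hGint
    rw [hbound, Real.norm_eq_abs, abs_of_nonneg ENNReal.toReal_nonneg]
    exact ENNReal.ofReal_toReal_le
  -- each partial sum is measurable & integrable, with integral 0
  have hbmeas : ∀ i, Measurable (fun ω => bterm P α A ω i) := by
    intro i
    have : Measurable (fun ω => ind (A i) ω) := measurable_const.indicator (hmeas i)
    exact ((this.sub measurable_const).const_mul _)
  have hSmeas : ∀ n, Measurable (fun ω => ∑ i ∈ Finset.range n, bterm P α A ω i) := by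
    intro n
    exact Finset.measurable_sum _ fun i _ => hbmeas i
  have hind_int : ∀ i, Integrable (fun ω => ind (A i) ω) μ := by
    intro i
    unfold ind
    exact (integrable_const (1:ℝ)).indicator (hmeas i)
  have hbint : ∀ i, Integrable (fun ω => bterm P α A ω i) μ := by
    intro i
    exact (((hind_int i).sub (integrable_const _)).const_mul _)
  have hind_integral : ∀ i, ∫ ω, ind (A i) ω ∂μ = P (A i) := by
    intro i
    unfold ind
    rw [integral_indicator_const (1:ℝ) (hmeas i), measureReal_def, hμA i,
      ENNReal.toReal_ofReal (hnnP i), smul_eq_mul, mul_one]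
  have hbzero : ∀ i, ∫ ω, bterm P α A ω i ∂μ = 0 := by
    intro i
    unfold bterm
    rw [integral_const_mul, integral_sub (hind_int i) (integrable_const _),
      hind_integral i, integral_const, probReal_univ]
    simp
  have hSzero : ∀ n, ∫ ω, (∑ i ∈ Finset.range n, bterm P α A ω i) ∂μ = 0 := by
    intro n
    rw [integral_finset_sum _ fun i _ => hbint i]
    simp [hbzero]
  -- dominated convergence
  have hDCT : Tendsto (fun n => ∫ ω, (∑ i ∈ Finset.range n, bterm P α A ω i) ∂μ) atTop
      (nhds (∫ ω, L ω ∂μ)) := by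
    refine tendsto_integral_of_dominated_convergence bound
      (fun n => (hSmeas n).aestronglyMeasurable) hbound_int
      (fun n => hGae.mono fun ω hω => ?_) (Filter.Eventually.of_forall fun ω => hL1 ω)
    rw [Real.norm_eq_abs]
    exact hdom ω hω n
  have hLint : Integrable L μ := by
    have hLmeas : Measurable L :=
      measurable_of_tendsto_metrizable hSmeas (tendsto_pi_nhds.2 hL1)
    refine Integrable.mono' hbound_int hLmeas.aestronglyMeasurable
      (hGae.mono fun ω hω => ?_)
    rw [Real.norm_eq_abs]
    exact le_of_tendsto (hL1 ω).abs (Filter.Eventually.of_forall fun n => hdom ω hω n)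
  have h0 : Tendsto (fun n => ∫ ω, (∑ i ∈ Finset.range n, bterm P α A ω i) ∂μ) atTop
      (nhds 0) := by
    simp_rw [hSzero]
    exact tendsto_const_nhds
  have hint0 : ∫ ω, L ω ∂μ = 0 := tendsto_nhds_unique hDCT h0
  have hle : ∫ ω, L ω ∂μ ≤ ∫ _ω, (-ε) ∂μ :=
    integral_mono hLint (integrable_const _) hL2
  rw [integral_const, probReal_univ] at hle
  simp at hle
  rw [hint0] at hle
  linarith


theorem stmt3 (C : Set (Set Ω)) (P : Set Ω → ℝ) (hC : IsSetField C)
    (hrange : ∀ A ∈ C, P A ∈ Set.Icc (0:ℝ) 1) :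
    CoherentIn P (System2 C P) ↔ IsCAProb C P := by
  constructor
  · intro hco
    have huniv := coh_univ hC hco
    have hnn : ∀ A ∈ C, 0 ≤ P A := fun A hA => (hrange A hA).1
    have hadd : ∀ A ∈ C, ∀ B ∈ C, Disjoint A B → P (A ∪ B) = P A + P B :=
      fun A hA B hB hd => coh_add hC hco hA hB hd
    exact ⟨huniv, hnn, hadd, fun A hA hd hU => coh_ca hC hrange hco hadd A hA hd hU⟩
  · intro hP
    exact ca_coherent hC hrange hP
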